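/- arXiv:2110.07081 — 3 statements merged into one kernel-verified Lean document; each statement's English description precedes it below -/
import Mathlib

section
/- Let A be a unital C*-algebra, let a, g ∈ A satisfy 0 ≤ a ≤ 1 and 0 ≤ g ≤ 1, and let ε₁, ε₂ ≥ 0. Then, with comparison taken in the 2×2 matrix algebra M₂(A), one has (a − (ε₁ + ε₂))_+ ≼ ((1 − g) a (1 − g) − ε₁)_+ ⊕ (g − ε₂/2)_+. -/
attribute [local instance] Matrix.linftyOpNormedRing

/-- `a` is Cuntz subequivalent to `b`: for every `ε > 0` there is `y` with
`‖y * b * y* - a‖ < ε`. -/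
def CuntzLE {A : Type*} [NonUnitalNormedRing A] [StarRing A] (a b : A) : Prop :=
  ∀ ε > (0 : ℝ), ∃ y : A, ‖y * b * star y - a‖ < ε

/-- `(a - ε)₊`, the image of `a` under the continuous functional calculus applied to
`t ↦ max (t - ε) 0`. -/
noncomputable def cutdown {A : Type*} [CStarAlgebra A] (a : A) (ε : ℝ) : A :=
  cfc (fun t : ℝ => max (t - ε) 0) a

set_option linter.unusedSectionVars false
set_option linter.unusedVariables false

section Lemmas

variable {A : Type*} [CStarAlgebra A] [PartialOrder A] [StarOrderedRing A]


lemma myKey0 (x : A) (n : ℕ) : star x * (x * star x)^n * x = (star x * x)^(n+1) := by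
  induction n with
  | zero => simp [pow_succ]
  | succ n ih =>
    rw [pow_succ, pow_succ, ← mul_assoc, ← ih]
    noncomm_ring

open Polynomial in
lemma myKeyPoly (x : A) (p : ℝ[X]) :
    star x * (aeval (x * star x) p) * x = aeval (star x * x) (X * p) := by
  induction p using Polynomial.induction_on' with
  | add p q hp hq =>
    rw [mul_add, map_add, mul_add, add_mul, hp, hq, map_add]
  | monomial n r =>
    simp only [aeval_monomial, ← Algebra.smul_def, X_mul_monomial]
    rw [mul_smul_comm, smul_mul_assoc, myKey0]

open Polynomial in
lemma myKey (x : A) (f : ℝ → ℝ) (hf : Continuous f) :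
    star x * cfc f (x * star x) * x = cfc (fun t : ℝ => t * f t) (star x * x) := by
  nontriviality A
  set a := star x * x with ha_def
  set b := x * star x with hb_def
  have ha : (0:A) ≤ a := star_mul_self_nonneg x
  have hb : (0:A) ≤ b := mul_star_self_nonneg x
  set M : ℝ := max ‖a‖ ‖b‖ with hM_def
  have hM0 : 0 ≤ M := le_trans (norm_nonneg a) (le_max_left _ _)
  have hspec_a : ∀ t ∈ spectrum ℝ a, t ∈ Set.Icc (0:ℝ) M := fun t ht =>
    ⟨spectrum_nonneg_of_nonneg ha ht,
     le_trans (Real.le_norm_self t) (le_trans (spectrum.norm_le_norm_of_mem ht) (le_max_left _ _))⟩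
  have hspec_b : ∀ t ∈ spectrum ℝ b, t ∈ Set.Icc (0:ℝ) M := fun t ht =>
    ⟨spectrum_nonneg_of_nonneg hb ht,
     le_trans (Real.le_norm_self t) (le_trans (spectrum.norm_le_norm_of_mem ht) (le_max_right _ _))⟩
  have key : ∀ η : ℝ, 0 < η →
      ‖star x * cfc f b * x - cfc (fun t : ℝ => t * f t) a‖ ≤ (‖x‖^2 + M) * η := by
    intro η hη
    obtain ⟨p, hp⟩ := exists_polynomial_near_continuousMap 0 M
      ((ContinuousMap.mk f hf).restrict (Set.Icc (0:ℝ) M)) η hη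
    have hpt : ∀ t ∈ Set.Icc (0:ℝ) M, |p.eval t - f t| ≤ η := by
      intro t ht
      have := (p.toContinuousMapOn (Set.Icc (0:ℝ) M) -
        ((ContinuousMap.mk f hf).restrict (Set.Icc (0:ℝ) M))).norm_coe_le_norm ⟨t, ht⟩
      simp only [ContinuousMap.sub_apply, Polynomial.toContinuousMapOn_apply,
        ContinuousMap.restrict_apply, ContinuousMap.coe_mk, Polynomial.toContinuousMap_apply,
        Real.norm_eq_abs] at this
      exact le_of_lt (lt_of_le_of_lt this hp)
    have hpoly : star x * (aeval b p) * x = aeval a (X * p) := myKeyPoly x p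
    have e1 : cfc (fun t : ℝ => p.eval t) b = aeval b p := cfc_polynomial p b (IsSelfAdjoint.of_nonneg hb)
    have e2 : cfc (fun t : ℝ => t * p.eval t) a = aeval a (X * p) := by
      rw [← cfc_polynomial (X * p) a (IsSelfAdjoint.of_nonneg ha)]
      exact cfc_congr fun t _ => by simp [eval_mul]
    have hsplit : star x * cfc f b * x - cfc (fun t : ℝ => t * f t) a =
        star x * (cfc f b - cfc (fun t : ℝ => p.eval t) b) * x +
        (cfc (fun t : ℝ => t * p.eval t) a - cfc (fun t : ℝ => t * f t) a) := by
      rw [e1, e2, ← hpoly]; noncomm_ring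
    rw [hsplit]
    have bound1 : ‖star x * (cfc f b - cfc (fun t : ℝ => p.eval t) b) * x‖ ≤ ‖x‖^2 * η := by
      have hc : ‖cfc f b - cfc (fun t : ℝ => p.eval t) b‖ ≤ η := by
        rw [← cfc_sub f (fun t : ℝ => p.eval t) b hf.continuousOn (Polynomial.continuousOn _)]
        refine norm_cfc_le (le_of_lt hη) fun t ht => ?_
        rw [Real.norm_eq_abs, abs_sub_comm]
        exact hpt t (hspec_b t ht)
      calc ‖star x * (cfc f b - cfc (fun t : ℝ => p.eval t) b) * x‖
          ≤ ‖star x * (cfc f b - cfc (fun t : ℝ => p.eval t) b)‖ * ‖x‖ := norm_mul_le _ _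
        _ ≤ (‖star x‖ * ‖cfc f b - cfc (fun t : ℝ => p.eval t) b‖) * ‖x‖ := by
            gcongr; exact norm_mul_le _ _
        _ ≤ (‖x‖ * η) * ‖x‖ := by rw [norm_star]; gcongr
        _ = ‖x‖^2 * η := by ring
    have bound2 : ‖cfc (fun t : ℝ => t * p.eval t) a - cfc (fun t : ℝ => t * f t) a‖ ≤ M * η := by
      rw [← cfc_sub (fun t : ℝ => t * p.eval t) (fun t : ℝ => t * f t) a (by fun_prop) (by fun_prop)]
      refine norm_cfc_le (by positivity) fun t ht => ?_
      obtain ⟨ht0, htM⟩ := hspec_a t ht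
      rw [Real.norm_eq_abs, ← mul_sub, abs_mul, abs_of_nonneg ht0]
      exact mul_le_mul htM (hpt t (hspec_a t ht)) (abs_nonneg _) hM0
    calc ‖_ + _‖ ≤ _ + _ := norm_add_le _ _
      _ ≤ ‖x‖^2 * η + M * η := add_le_add bound1 bound2
      _ = (‖x‖^2 + M) * η := by ring
  rw [← sub_eq_zero, ← norm_le_zero_iff]
  refine le_of_forall_pos_le_add fun ε hε => ?_
  have hC : (0:ℝ) < ‖x‖^2 + M + 1 := by positivity
  calc ‖_‖ ≤ (‖x‖^2 + M) * (ε / (‖x‖^2 + M + 1)) := key _ (by positivity)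
    _ ≤ ε := by
        rw [mul_div_assoc']
        exact div_le_of_le_mul₀ (by positivity) (le_of_lt hε) (by nlinarith)
    _ = 0 + ε := by ring


lemma cutdown_nonneg (a : A) (ε : ℝ) : 0 ≤ cutdown a ε :=
  cfc_nonneg fun t _ => le_max_right _ _

lemma cutdown_zero {a : A} (ha : 0 ≤ a) : cutdown a 0 = a := by
  rw [cutdown]
  have : cfc (fun t : ℝ => max (t - 0) 0) a = cfc (id : ℝ → ℝ) a := by
    refine cfc_congr fun t ht => ?_
    have h0 : 0 ≤ t := spectrum_nonneg_of_nonneg ha ht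
    simp [max_eq_left, h0]
  rw [this, cfc_id ℝ a (IsSelfAdjoint.of_nonneg ha)]

lemma norm_cutdown_sub_cutdown {a : A} (ha : 0 ≤ a) (ε δ : ℝ) :
    ‖cutdown a (ε + δ) - cutdown a ε‖ ≤ |δ| := by
  rw [cutdown, cutdown,
    ← cfc_sub (fun t : ℝ => max (t - (ε + δ)) 0) (fun t : ℝ => max (t - ε) 0) a
      (by fun_prop) (by fun_prop)]
  refine norm_cfc_le (abs_nonneg δ) fun t _ => ?_
  rw [Real.norm_eq_abs]
  calc |max (t - (ε + δ)) 0 - max (t - ε) 0| ≤ |(t - (ε + δ)) - (t - ε)| :=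
        abs_max_sub_max_le_abs _ _ _
    _ = |δ| := by rw [abs_sub_comm]; ring_nf

lemma self_le_cutdown_add {a : A} (ha : 0 ≤ a) {ε : ℝ} (hε : 0 ≤ ε) :
    a ≤ cutdown a ε + algebraMap ℝ A ε := by
  have h1 : cutdown a ε + algebraMap ℝ A ε = cfc (fun t : ℝ => max (t - ε) 0 + ε) a := by
    rw [cfc_add a (fun t : ℝ => max (t - ε) 0) (fun _ : ℝ => ε) (by fun_prop) (by fun_prop),
      cfc_const ε a (IsSelfAdjoint.of_nonneg ha), cutdown]
  rw [h1]
  conv_lhs => rw [← cfc_id ℝ a (IsSelfAdjoint.of_nonneg ha)]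
  refine cfc_mono fun t _ => ?_
  rcases le_total t ε with h | h
  · simpa [max_eq_right (by linarith : t - ε ≤ 0)] using h
  · simp [max_eq_left (by linarith : 0 ≤ t - ε)]


lemma cuntz_of_le {x y : A} (hx : 0 ≤ x) (hxy : x ≤ y) : CuntzLE x y := by
  intro ε hε
  set δ : ℝ := ε / 2 with hδ_def
  have hδ : 0 < δ := by positivity
  have hy : 0 ≤ y := hx.trans hxy
  have hsx : IsSelfAdjoint x := .of_nonneg hx
  have hsy : IsSelfAdjoint y := .of_nonneg hy
  have hspx : ∀ t ∈ spectrum ℝ x, 0 ≤ t := fun t ht => spectrum_nonneg_of_nonneg hx ht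
  have hspy : ∀ t ∈ spectrum ℝ y, 0 ≤ t := fun t ht => spectrum_nonneg_of_nonneg hy ht
  have hcont_inv : ∀ z : A, (0 ≤ z) → ContinuousOn (fun t : ℝ => (t + δ)⁻¹) (spectrum ℝ z) :=
    fun z hz => ContinuousOn.inv₀ (by fun_prop) fun t ht => by
      have := spectrum_nonneg_of_nonneg hz ht; positivity
  -- resolvents
  set R : A := cfc (fun t : ℝ => (t + δ)⁻¹) y with hR_def
  set Rx : A := cfc (fun t : ℝ => (t + δ)⁻¹) x with hRx_def
  -- the shifted elements as cfc
  have hyδ : y + algebraMap ℝ A δ = cfc (fun t : ℝ => t + δ) y := by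
    rw [cfc_add y (fun t : ℝ => t) (fun _ : ℝ => δ) (by fun_prop) (by fun_prop),
      cfc_const δ y hsy, cfc_id' ℝ y hsy]
  have hxδ : x + algebraMap ℝ A δ = cfc (fun t : ℝ => t + δ) x := by
    rw [cfc_add x (fun t : ℝ => t) (fun _ : ℝ => δ) (by fun_prop) (by fun_prop),
      cfc_const δ x hsx, cfc_id' ℝ x hsx]
  have hmulYR : (y + algebraMap ℝ A δ) * R = 1 := by
    rw [hyδ, hR_def, ← cfc_mul (fun t : ℝ => t + δ) (fun t : ℝ => (t + δ)⁻¹) y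
      (by fun_prop) (hcont_inv y hy)]
    rw [← cfc_one (R := ℝ) y hsy]
    refine cfc_congr fun t ht => ?_
    have := hspy t ht
    field_simp; rfl
  have hmulRY : R * (y + algebraMap ℝ A δ) = 1 := by
    rw [hyδ, hR_def, ← cfc_mul (fun t : ℝ => (t + δ)⁻¹) (fun t : ℝ => t + δ) y
      (hcont_inv y hy) (by fun_prop)]
    rw [← cfc_one (R := ℝ) y hsy]
    refine cfc_congr fun t ht => ?_
    have := hspy t ht
    field_simp; rfl
  have hmulXR : (x + algebraMap ℝ A δ) * Rx = 1 := by
    rw [hxδ, hRx_def, ← cfc_mul (fun t : ℝ => t + δ) (fun t : ℝ => (t + δ)⁻¹) x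
      (by fun_prop) (hcont_inv x hx)]
    rw [← cfc_one (R := ℝ) x hsx]
    refine cfc_congr fun t ht => ?_
    have := hspx t ht
    field_simp; rfl
  have hmulRX : Rx * (x + algebraMap ℝ A δ) = 1 := by
    rw [hxδ, hRx_def, ← cfc_mul (fun t : ℝ => (t + δ)⁻¹) (fun t : ℝ => t + δ) x
      (hcont_inv x hx) (by fun_prop)]
    rw [← cfc_one (R := ℝ) x hsx]
    refine cfc_congr fun t ht => ?_
    have := hspx t ht
    field_simp; rfl
  set Y : Aˣ := ⟨y + algebraMap ℝ A δ, R, hmulYR, hmulRY⟩ with hY_def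
  set X : Aˣ := ⟨x + algebraMap ℝ A δ, Rx, hmulXR, hmulRX⟩ with hX_def
  have hX0 : (0:A) ≤ (X : A) := by
    show (0:A) ≤ x + algebraMap ℝ A δ
    have : (0:A) ≤ algebraMap ℝ A δ := by
      rw [Algebra.algebraMap_eq_smul_one]
      exact smul_nonneg hδ.le zero_le_one
    exact add_nonneg hx this
  have hXY : (X : A) ≤ (Y : A) := by
    show x + algebraMap ℝ A δ ≤ y + algebraMap ℝ A δ
    exact add_le_add_left hxy _
  have hRRx : R ≤ Rx := CStarAlgebra.inv_le_inv hX0 hXY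
  have hR0 : (0:A) ≤ R := cfc_nonneg fun t ht => by
    have := hspy t ht; positivity
  -- the test element
  set u : A := cfc Real.sqrt x with hu_def
  have hu_sa : IsSelfAdjoint u := cfc_predicate Real.sqrt x
  have hcS : ContinuousOn (fun t : ℝ => Real.sqrt ((t + δ)⁻¹)) (spectrum ℝ y) :=
    Real.continuous_sqrt.comp_continuousOn (hcont_inv y hy)
  set S : A := cfc (fun t : ℝ => Real.sqrt ((t + δ)⁻¹)) y with hS_def
  have hS_sa : IsSelfAdjoint S := cfc_predicate _ y
  set w : A := u * S with hw_def
  refine ⟨w, ?_⟩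
  have hSyS : S * y * S = cfc (fun t : ℝ => t * (t + δ)⁻¹) y := by
    conv_lhs => rw [← cfc_id ℝ y hsy]
    rw [hS_def, ← cfc_mul _ _ y hcS (by fun_prop),
      ← cfc_mul _ _ y (by exact ContinuousOn.mul hcS (by fun_prop)) hcS]
    refine cfc_congr fun t ht => ?_
    have ht0 := hspy t ht
    have h1 : (0:ℝ) ≤ (t + δ)⁻¹ := by positivity
    have h2 : Real.sqrt ((t + δ)⁻¹) * Real.sqrt ((t + δ)⁻¹) = (t + δ)⁻¹ :=
      Real.mul_self_sqrt h1
    simp only [id_eq]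
    rw [mul_comm (Real.sqrt ((t + δ)⁻¹)) t, mul_assoc, h2]
  have huu : u * u = x := by
    rw [hu_def, ← cfc_mul _ _ x (by fun_prop) (by fun_prop)]
    conv_rhs => rw [← cfc_id ℝ x hsx]
    refine cfc_congr fun t ht => ?_
    exact Real.mul_self_sqrt (hspx t ht)
  have h4 : (1:A) - cfc (fun t : ℝ => t * (t + δ)⁻¹) y = δ • R := by
    rw [hR_def, ← cfc_smul δ (fun t : ℝ => (t + δ)⁻¹) y (hcont_inv y hy),
      ← cfc_const_one ℝ y hsy,
      ← cfc_sub (fun _ : ℝ => (1:ℝ)) (fun t : ℝ => t * (t + δ)⁻¹) y (by fun_prop)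
        (ContinuousOn.mul (by fun_prop) (hcont_inv y hy))]
    refine cfc_congr fun t ht => ?_
    rw [smul_eq_mul]
    have ht0 := hspy t ht
    have hne : t + δ ≠ 0 := by positivity
    field_simp; ring
  have hdiff : x - w * y * star w = δ • (u * R * u) := by
    have hstar : star w = S * u := by
      rw [hw_def, star_mul, hu_sa.star_eq, hS_sa.star_eq]
    rw [hstar, hw_def]
    calc x - u * S * y * (S * u)
        = u * ((1:A) - S * y * S) * u := by
            rw [← huu]; noncomm_ring
      _ = u * (δ • R) * u := by rw [hSyS, h4]
      _ = δ • (u * R * u) := by rw [mul_smul_comm, smul_mul_assoc]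
  have h5 : (0:A) ≤ u * R * u := by
    simpa [hu_sa.star_eq] using star_left_conjugate_nonneg hR0 u
  have h6 : u * R * u ≤ u * Rx * u := hu_sa.conjugate_le_conjugate hRRx
  have h7 : ‖u * Rx * u‖ ≤ 1 := by
    have : u * Rx * u = cfc (fun t : ℝ => Real.sqrt t * (t + δ)⁻¹ * Real.sqrt t) x := by
      rw [hu_def, hRx_def, ← cfc_mul _ _ x (by fun_prop) (hcont_inv x hx),
        ← cfc_mul _ _ x (by exact ContinuousOn.mul (by fun_prop) (hcont_inv x hx)) (by fun_prop)]
    rw [this]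
    refine norm_cfc_le zero_le_one fun t ht => ?_
    have ht0 := hspx t ht
    have h2 : Real.sqrt t * Real.sqrt t = t := Real.mul_self_sqrt ht0
    rw [Real.norm_eq_abs, mul_comm (Real.sqrt t) ((t + δ)⁻¹), mul_assoc, h2, abs_of_nonneg
      (by positivity)]
    rw [inv_mul_le_iff₀ (by positivity), mul_one]
    linarith
  have h8 : ‖u * R * u‖ ≤ 1 :=
    le_trans (CStarAlgebra.norm_le_norm_of_nonneg_of_le h5 h6) h7
  have : ‖w * y * star w - x‖ = ‖x - w * y * star w‖ := norm_sub_rev _ _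
  rw [this, hdiff, norm_smul, Real.norm_eq_abs, abs_of_pos hδ]
  calc δ * ‖u * R * u‖ ≤ δ * 1 := by gcongr
    _ < ε := by rw [mul_one]; rw [hδ_def]; linarith


lemma cuntz_trans {x y z : A} (h1 : CuntzLE x y) (h2 : CuntzLE y z) : CuntzLE x z := by
  intro ε hε
  obtain ⟨v, hv⟩ := h1 (ε/2) (by positivity)
  obtain ⟨w, hw⟩ := h2 ((ε/2)/(‖v‖^2+1)) (by positivity)
  refine ⟨v * w, ?_⟩
  have hsplit : v * w * z * star (v * w) - x =
      v * (w * z * star w - y) * star v + (v * y * star v - x) := by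
    rw [star_mul]; noncomm_ring
  rw [hsplit]
  have hb1 : ‖v * (w * z * star w - y) * star v‖ ≤ ‖v‖^2 * ((ε/2)/(‖v‖^2+1)) := by
    calc ‖v * (w * z * star w - y) * star v‖
        ≤ ‖v * (w * z * star w - y)‖ * ‖star v‖ := norm_mul_le _ _
      _ ≤ ‖v‖ * ‖w * z * star w - y‖ * ‖star v‖ := by gcongr; exact norm_mul_le _ _
      _ = ‖v‖^2 * ‖w * z * star w - y‖ := by rw [norm_star]; ring
      _ ≤ ‖v‖^2 * ((ε/2)/(‖v‖^2+1)) := mul_le_mul_of_nonneg_left hw.le (by positivity)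
  have hq : ‖v‖^2 * ((ε/2)/(‖v‖^2+1)) < ε/2 := by
    rw [mul_div_assoc']
    refine (div_lt_iff₀ (by positivity)).2 ?_
    nlinarith [norm_nonneg v, sq_nonneg ‖v‖]
  calc ‖_ + _‖ ≤ _ + _ := norm_add_le _ _
    _ < ε/2 + ε/2 := add_lt_add_of_le_of_lt (hb1.trans hq.le) hv
    _ = ε := by ring

lemma cuntz_smul_left {x : A} {c : ℝ} (hc : 0 ≤ c) : CuntzLE (c • x) x := by
  intro ε hε
  refine ⟨(Real.sqrt c) • 1, ?_⟩
  have : (Real.sqrt c • (1:A)) * x * star (Real.sqrt c • (1:A)) = c • x := by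
    rw [star_smul, star_one, star_trivial, smul_mul_assoc, smul_mul_assoc, one_mul, mul_smul_comm,
      mul_one, smul_smul, Real.mul_self_sqrt hc]
  rw [this, sub_self, norm_zero]
  exact hε



lemma sqrt_conj_helper (n m : ℝ) (hn : 0 ≤ n) (hm : 0 < m) :
    (Real.sqrt n / Real.sqrt m) * m * (Real.sqrt n / Real.sqrt m) = n := by
  have e1 : (Real.sqrt n / Real.sqrt m) * m * (Real.sqrt n / Real.sqrt m)
      = (Real.sqrt n * Real.sqrt n) * (m / (Real.sqrt m * Real.sqrt m)) := by ring
  rw [e1, Real.mul_self_sqrt hn, Real.mul_self_sqrt hm.le, div_self hm.ne', mul_one]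

lemma cuntz_cutdown_mul_star (x : A) {ε : ℝ} (hε : 0 ≤ ε) :
    CuntzLE (cutdown (star x * x) ε) (cutdown (x * star x) ε) := by
  intro τ hτ
  set δ : ℝ := τ / 2 with hδ_def
  have hδ : 0 < δ := by positivity
  set a : A := star x * x with ha_def
  set b : A := x * star x with hb_def
  have ha : (0:A) ≤ a := star_mul_self_nonneg x
  have hb : (0:A) ≤ b := mul_star_self_nonneg x
  set num : ℝ → ℝ := fun t => Real.sqrt (max (t - ε - δ) 0) with hnum_def
  set den : ℝ → ℝ := fun t => Real.sqrt (max (t * (t - ε)) (δ^2)) with hden_def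
  have hden_pos : ∀ t, 0 < den t := fun t =>
    Real.sqrt_pos.2 (lt_max_iff.2 (Or.inr (by positivity)))
  set f : ℝ → ℝ := fun t => num t / den t with hf_def
  have hfc : Continuous f := by
    refine Continuous.div ?_ ?_ fun t => (hden_pos t).ne'
    · exact Real.continuous_sqrt.comp (by fun_prop)
    · exact Real.continuous_sqrt.comp (by fun_prop)
  have hgc : Continuous (fun t : ℝ => max (t - ε) 0) := by fun_prop
  set w : A := cfc f a * star x with hw_def
  refine ⟨w, ?_⟩
  have hfa_sa : IsSelfAdjoint (cfc f a) := cfc_predicate f a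
  have hstar : star w = x * cfc f a := by rw [hw_def, star_mul, star_star, hfa_sa.star_eq]
  have hmid : star x * cutdown b ε * x = cfc (fun t : ℝ => t * max (t - ε) 0) a := by
    rw [cutdown, ha_def, hb_def]
    exact myKey x _ hgc
  have hcalc : w * cutdown b ε * star w = cutdown a (ε + δ) := by
    rw [hstar, hw_def]
    have e0 : cfc f a * star x * cutdown b ε * (x * cfc f a) =
        cfc f a * (star x * cutdown b ε * x) * cfc f a := by noncomm_ring
    rw [e0, hmid,
      ← cfc_mul _ _ a hfc.continuousOn (by fun_prop),
      ← cfc_mul _ _ a (by exact ContinuousOn.mul hfc.continuousOn (by fun_prop)) hfc.continuousOn,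
      cutdown]
    refine cfc_congr fun t _ => ?_
    rcases le_or_gt t (ε + δ) with hc | hc
    · have h1 : num t = 0 := by
        rw [hnum_def]; simp only []
        rw [max_eq_right (by linarith : t - ε - δ ≤ 0), Real.sqrt_zero]
      have h2 : f t = 0 := by rw [hf_def]; simp [h1]
      have h3 : max (t - (ε + δ)) 0 = 0 := max_eq_right (by linarith)
      simp [h2, h3]
    · have ht1 : δ < t - ε := by linarith
      have ht2 : (0:ℝ) < t - ε := by linarith
      have ht3 : δ < t := by linarith
      have hprod : δ^2 ≤ t * (t - ε) := by nlinarith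
      have hden_eq : den t = Real.sqrt (t * (t - ε)) := by
        rw [hden_def]; simp only []
        rw [max_eq_left hprod]
      have hnum_eq : num t = Real.sqrt (t - ε - δ) := by
        rw [hnum_def]; simp only []
        rw [max_eq_left (by linarith)]
      have hg_eq : max (t - ε) 0 = t - ε := max_eq_left ht2.le
      have hr_eq : max (t - (ε + δ)) 0 = t - ε - δ := by
        rw [max_eq_left (by linarith)]; ring
      rw [hg_eq, hr_eq, hf_def]
      simp only []
      rw [hnum_eq, hden_eq]
      exact sqrt_conj_helper _ _ (by linarith) (by nlinarith)
  rw [hcalc]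
  calc ‖cutdown a (ε + δ) - cutdown a ε‖ ≤ |δ| := norm_cutdown_sub_cutdown ha ε δ
    _ < τ := by rw [abs_of_pos hδ, hδ_def]; linarith

lemma phi_trick {a : A} (ha : 0 ≤ a) {ε δ : ℝ} (hε : 0 ≤ ε) (hδ : 0 < δ) :
    ∃ w : A, IsSelfAdjoint w ∧ w * (a - algebraMap ℝ A ε) * w = cutdown a (ε + δ) := by
  have hsa : IsSelfAdjoint a := .of_nonneg ha
  set φ : ℝ → ℝ := fun t => Real.sqrt (max (t - ε - δ) 0) / Real.sqrt (max (t - ε) δ) with hφ_def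
  have hden_pos : ∀ t : ℝ, 0 < Real.sqrt (max (t - ε) δ) := fun t =>
    Real.sqrt_pos.2 (lt_max_iff.2 (Or.inr hδ))
  have hφc : Continuous φ := by
    refine Continuous.div ?_ ?_ fun t => (hden_pos t).ne'
    · exact Real.continuous_sqrt.comp (by fun_prop)
    · exact Real.continuous_sqrt.comp (by fun_prop)
  refine ⟨cfc φ a, cfc_predicate φ a, ?_⟩
  have hsub : a - algebraMap ℝ A ε = cfc (fun t : ℝ => t - ε) a := by
    rw [cfc_sub (fun t : ℝ => t) (fun _ : ℝ => ε) a (by fun_prop) (by fun_prop),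
      cfc_id' ℝ a hsa, cfc_const ε a hsa]
  rw [hsub, ← cfc_mul _ _ a hφc.continuousOn (by fun_prop),
    ← cfc_mul _ _ a (by exact ContinuousOn.mul hφc.continuousOn (by fun_prop)) hφc.continuousOn,
    cutdown]
  refine cfc_congr fun t _ => ?_
  rcases le_or_gt t (ε + δ) with hc | hc
  · have h1 : φ t = 0 := by
      rw [hφ_def]
      simp only []
      rw [max_eq_right (by linarith : t - ε - δ ≤ 0), Real.sqrt_zero, zero_div]
    have h2 : max (t - (ε + δ)) 0 = 0 := max_eq_right (by linarith)
    simp [h1, h2]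
  · have ht2 : δ ≤ t - ε := by linarith
    have hφ_eq : φ t = Real.sqrt (t - ε - δ) / Real.sqrt (t - ε) := by
      rw [hφ_def]; simp only []
      rw [max_eq_left (by linarith), max_eq_left ht2]
    have hr_eq : max (t - (ε + δ)) 0 = t - ε - δ := by
      rw [max_eq_left (by linarith)]; ring
    rw [hφ_eq, hr_eq]
    exact sqrt_conj_helper _ _ (by linarith) (by linarith)


lemma conj_approx {u d p' : A} (τ' : ℝ) (hτ' : 0 < τ') (h : CuntzLE d p') :
    ∃ y : A, ‖(u * y) * p' * star (u * y) - u * d * star u‖ < τ' := by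
  obtain ⟨y, hy⟩ := h (τ' / (‖u‖^2 + 1)) (by positivity)
  refine ⟨y, ?_⟩
  have he : (u * y) * p' * star (u * y) - u * d * star u
      = u * (y * p' * star y - d) * star u := by
    rw [star_mul]; noncomm_ring
  rw [he]
  calc ‖u * (y * p' * star y - d) * star u‖
      ≤ ‖u * (y * p' * star y - d)‖ * ‖star u‖ := norm_mul_le _ _
    _ ≤ ‖u‖ * ‖y * p' * star y - d‖ * ‖star u‖ := by gcongr; exact norm_mul_le _ _
    _ = ‖u‖^2 * ‖y * p' * star y - d‖ := by rw [norm_star]; ring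
    _ ≤ ‖u‖^2 * (τ' / (‖u‖^2 + 1)) := mul_le_mul_of_nonneg_left hy.le (by positivity)
    _ < τ' := by
        rw [mul_div_assoc']
        refine (div_lt_iff₀ (by positivity)).2 ?_
        nlinarith [sq_nonneg ‖u‖]

lemma main_approx (a g : A) (ha₀ : 0 ≤ a) (ha₁ : a ≤ 1) (hg₀ : 0 ≤ g) (hg₁ : g ≤ 1)
    (ε₁ ε₂ : ℝ) (hε₁ : 0 ≤ ε₁) (hε₂ : 0 ≤ ε₂) :
    ∀ τ > (0:ℝ), ∃ y₁ y₂ : A,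
      ‖y₁ * cutdown ((1 - g) * a * (1 - g)) ε₁ * star y₁ +
        y₂ * cutdown g (ε₂ / 2) * star y₂ - cutdown a (ε₁ + ε₂)‖ < τ := by
  have hsa_a : IsSelfAdjoint a := .of_nonneg ha₀
  have hsa_g : IsSelfAdjoint g := .of_nonneg hg₀
  have hsg1 : IsSelfAdjoint ((1:A) - g) := by
    rw [IsSelfAdjoint, star_sub, star_one, hsa_g.star_eq]
  have hspa : ∀ t ∈ spectrum ℝ a, 0 ≤ t := fun t ht => spectrum_nonneg_of_nonneg ha₀ ht
  -- square roots
  set sa : A := cfc Real.sqrt a with hsa_def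
  have hsa_sa : IsSelfAdjoint sa := cfc_predicate Real.sqrt a
  have hsasa : sa * sa = a := by
    rw [hsa_def, ← cfc_mul _ _ a (by fun_prop) (by fun_prop)]
    conv_rhs => rw [← cfc_id ℝ a hsa_a]
    exact cfc_congr fun t ht => Real.mul_self_sqrt (hspa t ht)
  set sk : A := cfc (fun t : ℝ => Real.sqrt (max (2*t - ε₂) 0)) g with hsk_def
  have hsk_sa : IsSelfAdjoint sk := cfc_predicate _ g
  set k : A := cfc (fun t : ℝ => max (2*t - ε₂) 0) g with hk_def
  have hsksk : sk * sk = k := by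
    rw [hsk_def, hk_def, ← cfc_mul _ _ g (by fun_prop) (by fun_prop)]
    exact cfc_congr fun t _ => Real.mul_self_sqrt (le_max_right _ _)
  have hk2m : k = (2:ℝ) • cutdown g (ε₂/2) := by
    rw [hk_def, cutdown, ← cfc_smul (2:ℝ) _ g (by fun_prop)]
    refine cfc_congr fun t _ => ?_
    rw [smul_eq_mul]
    rcases le_total t (ε₂/2) with h | h
    · rw [max_eq_right (by linarith), max_eq_right (by linarith), mul_zero]
    · rw [max_eq_left (by linarith), max_eq_left (by linarith)]; ring
  -- the pieces
  set c : A := (1 - g) * sa with hc_def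
  set D : A := star c * c with hD_def
  have hD0 : (0:A) ≤ D := star_mul_self_nonneg c
  set p : A := cutdown D ε₁ with hp_def
  set q : A := sa * k * sa with hq_def
  have hq0 : (0:A) ≤ q := by
    have : q = star sa * k * sa := by rw [hq_def, hsa_sa.star_eq]
    rw [this]
    exact star_left_conjugate_nonneg (cfc_nonneg fun t _ => le_max_right _ _) sa
  -- the order inequality
  have hz : a - algebraMap ℝ A (ε₁ + ε₂) ≤ p + q := by
    have hdecomp : a = D + sa * (g + g - g * g) * sa := by
      have h1 : D = sa * ((1 - g) * (1 - g)) * sa := by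
        rw [hD_def, hc_def, star_mul, hsg1.star_eq, hsa_sa.star_eq]; noncomm_ring
      rw [h1]
      have h2 : sa * ((1 - g) * (1 - g)) * sa + sa * (g + g - g * g) * sa = sa * sa := by
        noncomm_ring
      rw [h2, hsasa]
    have step1 : sa * (g + g - g * g) * sa ≤ sa * (g + g) * sa := by
      have hgg : g + g - g * g ≤ g + g := by
        have hg2 : (0:A) ≤ g * g := by
          have := star_mul_self_nonneg g; rwa [hsa_g.star_eq] at this
        exact sub_le_self (g + g) hg2
      exact hsa_sa.conjugate_le_conjugate hgg
    have step2 : g + g ≤ k + algebraMap ℝ A ε₂ := by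
      have e1 : g + g = cfc (fun t : ℝ => t + t) g := by
        rw [cfc_add g (fun t : ℝ => t) (fun t : ℝ => t) (by fun_prop) (by fun_prop),
          cfc_id' ℝ g hsa_g]
      have e2 : k + algebraMap ℝ A ε₂ = cfc (fun t : ℝ => max (2*t - ε₂) 0 + ε₂) g := by
        rw [cfc_add g (fun t : ℝ => max (2*t - ε₂) 0) (fun _ : ℝ => ε₂) (by fun_prop)
          (by fun_prop), cfc_const ε₂ g hsa_g, hk_def]
      rw [e1, e2]
      refine cfc_mono fun t _ => ?_
      rcases le_total t (ε₂/2) with h | h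
      · rw [max_eq_right (by linarith)]; linarith
      · rw [max_eq_left (by linarith)]; linarith
    have step3 : sa * (g + g) * sa ≤ q + (ε₂ : ℝ) • a := by
      have h3 := hsa_sa.conjugate_le_conjugate step2
      have h4 : sa * (k + algebraMap ℝ A ε₂) * sa = q + (ε₂ : ℝ) • a := by
        rw [mul_add, add_mul, hq_def]
        congr 1
        rw [Algebra.algebraMap_eq_smul_one, mul_smul_comm, smul_mul_assoc, mul_one, hsasa]
      rw [← h4]; exact h3
    have step4 : (ε₂ : ℝ) • a ≤ algebraMap ℝ A ε₂ := by
      rw [Algebra.algebraMap_eq_smul_one]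
      exact smul_le_smul_of_nonneg_left ha₁ hε₂
    have step5 : D ≤ p + algebraMap ℝ A ε₁ := by
      rw [hp_def]; exact self_le_cutdown_add hD0 hε₁
    have halg : algebraMap ℝ A (ε₁ + ε₂) = algebraMap ℝ A ε₁ + algebraMap ℝ A ε₂ :=
      map_add _ _ _
    calc a - algebraMap ℝ A (ε₁ + ε₂)
        = (D + sa * (g + g - g * g) * sa) - algebraMap ℝ A (ε₁ + ε₂) := by rw [← hdecomp]
      _ ≤ (p + algebraMap ℝ A ε₁ + (q + (ε₂:ℝ) • a)) - algebraMap ℝ A (ε₁ + ε₂) := by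
          have := add_le_add step5 (step1.trans step3)
          exact sub_le_sub_right this _
      _ ≤ (p + algebraMap ℝ A ε₁ + (q + algebraMap ℝ A ε₂)) - algebraMap ℝ A (ε₁ + ε₂) := by
          have := add_le_add_right (add_le_add_right step4 q) (p + algebraMap ℝ A ε₁)
          exact sub_le_sub_right this _
      _ = p + q := by rw [halg]; abel
  -- Cuntz comparisons of the pieces
  have hpP : CuntzLE p (cutdown ((1 - g) * a * (1 - g)) ε₁) := by
    have hBeq : (1 - g) * a * (1 - g) = c * star c := by
      rw [hc_def, star_mul, hsg1.star_eq, hsa_sa.star_eq, ← hsasa]; noncomm_ring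
    rw [hp_def, hD_def, hBeq]
    exact cuntz_cutdown_mul_star c hε₁
  have hqQ : CuntzLE q (cutdown g (ε₂/2)) := by
    set x' : A := sk * sa with hx'_def
    have hx'1 : star x' * x' = q := by
      rw [hx'_def, star_mul, hsk_sa.star_eq, hsa_sa.star_eq, hq_def, ← hsksk]; noncomm_ring
    have hx'2 : x' * star x' = sk * a * sk := by
      rw [hx'_def, star_mul, hsk_sa.star_eq, hsa_sa.star_eq, ← hsasa]; noncomm_ring
    have hq_c : CuntzLE q (sk * a * sk) := by
      have h0 := cuntz_cutdown_mul_star x' (le_refl (0:ℝ))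
      rw [hx'1, hx'2] at h0
      have hsk_a0 : (0:A) ≤ sk * a * sk := by
        have : sk * a * sk = star sk * a * sk := by rw [hsk_sa.star_eq]
        rw [this]; exact star_left_conjugate_nonneg ha₀ sk
      rwa [cutdown_zero hq0, cutdown_zero hsk_a0] at h0
    have hsk_le : sk * a * sk ≤ (2:ℝ) • cutdown g (ε₂/2) := by
      have h1 : sk * a * sk ≤ sk * 1 * sk := hsk_sa.conjugate_le_conjugate ha₁
      rw [mul_one, hsksk, hk2m] at h1
      exact h1
    have hsk_a0 : (0:A) ≤ sk * a * sk := by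
      have : sk * a * sk = star sk * a * sk := by rw [hsk_sa.star_eq]
      rw [this]; exact star_left_conjugate_nonneg ha₀ sk
    exact cuntz_trans (cuntz_trans hq_c (cuntz_of_le hsk_a0 hsk_le))
      (cuntz_smul_left (by norm_num))
  -- assemble
  intro τ hτ
  have hδ : (0:ℝ) < τ/2 := by positivity
  obtain ⟨w, hw_sa, hw_eq⟩ := phi_trick ha₀ (add_nonneg hε₁ hε₂) hδ
  have hconj : cutdown a (ε₁ + ε₂ + τ/2) ≤ w * (p + q) * w := by
    rw [← hw_eq]
    exact hw_sa.conjugate_le_conjugate hz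
  have hcuntz1 : CuntzLE (cutdown a (ε₁ + ε₂ + τ/2)) (w * (p + q) * w) :=
    cuntz_of_le (cutdown_nonneg a _) hconj
  obtain ⟨v, hv⟩ := hcuntz1 (τ/8) (by positivity)
  -- v * (w * (p+q) * w) * star v = (v*w) * p * star (v*w) + (v*w) * q * star (v*w)
  set u : A := v * w with hu_def
  have hexp : v * (w * (p + q) * w) * star v = u * p * star u + u * q * star u := by
    rw [hu_def, star_mul, hw_sa.star_eq]; noncomm_ring
  obtain ⟨y₁, hy₁⟩ := conj_approx (u := u) (d := p) (τ/8) (by positivity) hpP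
  obtain ⟨y₂, hy₂⟩ := conj_approx (u := u) (d := q) (τ/8) (by positivity) hqQ
  refine ⟨u * y₁, u * y₂, ?_⟩
  set T1 : A := (u * y₁) * cutdown ((1 - g) * a * (1 - g)) ε₁ * star (u * y₁) - u * p * star u
    with hT1
  set T2 : A := (u * y₂) * cutdown g (ε₂/2) * star (u * y₂) - u * q * star u with hT2
  set T3 : A := v * (w * (p + q) * w) * star v - cutdown a (ε₁ + ε₂ + τ/2) with hT3
  set T4 : A := cutdown a (ε₁ + ε₂ + τ/2) - cutdown a (ε₁ + ε₂) with hT4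
  have hsplit :
      (u * y₁) * cutdown ((1 - g) * a * (1 - g)) ε₁ * star (u * y₁) +
        (u * y₂) * cutdown g (ε₂/2) * star (u * y₂) - cutdown a (ε₁ + ε₂)
      = T1 + T2 + T3 + T4 := by
    rw [hT1, hT2, hT3, hT4, hexp]; abel
  rw [hsplit]
  have hlast : ‖T4‖ ≤ τ/2 := by
    have := norm_cutdown_sub_cutdown ha₀ (ε₁ + ε₂) (τ/2)
    rwa [abs_of_pos hδ] at this
  have hb1 : ‖T1‖ < τ/8 := hy₁
  have hb2 : ‖T2‖ < τ/8 := hy₂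
  have hb3 : ‖T3‖ < τ/8 := hv
  calc ‖T1 + T2 + T3 + T4‖
      ≤ ‖T1 + T2 + T3‖ + ‖T4‖ := norm_add_le _ _
    _ ≤ (‖T1 + T2‖ + ‖T3‖) + ‖T4‖ := by gcongr; exact norm_add_le _ _
    _ ≤ ((‖T1‖ + ‖T2‖) + ‖T3‖) + ‖T4‖ := by gcongr; exact norm_add_le _ _
    _ < ((τ/8 + τ/8) + τ/8) + τ/2 :=
        add_lt_add_of_lt_of_le (add_lt_add (add_lt_add hb1 hb2) hb3) hlast
    _ ≤ τ := by linarith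


lemma norm_corner (d : A) : ‖(!![d, 0; 0, 0] : Matrix (Fin 2) (Fin 2) A)‖ = ‖d‖ := by
  rw [Matrix.linfty_opNorm_def]
  have h0 : ∀ j : Fin 2, ‖(!![d, 0; 0, 0] : Matrix (Fin 2) (Fin 2) A) 1 j‖₊ = 0 := by
    intro j; fin_cases j <;> simp
  have hrow1 : (∑ j : Fin 2, ‖(!![d, 0; 0, 0] : Matrix (Fin 2) (Fin 2) A) 1 j‖₊) = 0 := by
    simp [Fin.sum_univ_two]
  have hrow0 : (∑ j : Fin 2, ‖(!![d, 0; 0, 0] : Matrix (Fin 2) (Fin 2) A) 0 j‖₊) = ‖d‖₊ := by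
    simp [Fin.sum_univ_two]
  have hsup : ∀ f : Fin 2 → NNReal, ((Finset.univ : Finset (Fin 2)).sup f) = f 0 ⊔ f 1 := by
    intro f
    rw [show (Finset.univ : Finset (Fin 2)) = {0, 1} from rfl, Finset.sup_insert,
      Finset.sup_singleton]
  rw [hsup, hrow0, hrow1]
  simp

lemma cuntzLE_matrix {r P Q : A}
    (h : ∀ τ > (0:ℝ), ∃ y₁ y₂ : A, ‖y₁ * P * star y₁ + y₂ * Q * star y₂ - r‖ < τ) :
    CuntzLE (Matrix.diagonal ![r, 0]) (Matrix.diagonal ![P, Q]) := by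
  intro ε hε
  obtain ⟨y₁, y₂, hy⟩ := h ε hε
  refine ⟨!![y₁, y₂; 0, 0], ?_⟩
  have hdP : (Matrix.diagonal ![P, Q] : Matrix (Fin 2) (Fin 2) A) = !![P, 0; 0, Q] := by
    ext i j; fin_cases i <;> fin_cases j <;> simp [Matrix.diagonal]
  have hdr : (Matrix.diagonal ![r, 0] : Matrix (Fin 2) (Fin 2) A) = !![r, 0; 0, 0] := by
    ext i j; fin_cases i <;> fin_cases j <;> simp [Matrix.diagonal]
  have hstar : star (!![y₁, y₂; 0, 0] : Matrix (Fin 2) (Fin 2) A)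
      = !![star y₁, 0; star y₂, 0] := by
    rw [Matrix.star_eq_conjTranspose]
    ext i j; fin_cases i <;> fin_cases j <;> simp
  have hM : (!![y₁, y₂; 0, 0] : Matrix (Fin 2) (Fin 2) A) * Matrix.diagonal ![P, Q] *
      star (!![y₁, y₂; 0, 0] : Matrix (Fin 2) (Fin 2) A) - Matrix.diagonal ![r, 0]
      = !![y₁ * P * star y₁ + y₂ * Q * star y₂ - r, 0; 0, 0] := by
    rw [hdP, hdr, hstar, Matrix.mul_fin_two, Matrix.mul_fin_two]
    ext i j
    fin_cases i <;> fin_cases j <;> simp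
  rw [hM, norm_corner]
  exact hy

end Lemmas

theorem stmt3 {A : Type*} [CStarAlgebra A] [PartialOrder A] [StarOrderedRing A]
    (a g : A) (ha₀ : 0 ≤ a) (ha₁ : a ≤ 1) (hg₀ : 0 ≤ g) (hg₁ : g ≤ 1)
    (ε₁ ε₂ : ℝ) (hε₁ : 0 ≤ ε₁) (hε₂ : 0 ≤ ε₂) :
    CuntzLE (Matrix.diagonal ![cutdown a (ε₁ + ε₂), 0])
      (Matrix.diagonal ![cutdown ((1 - g) * a * (1 - g)) ε₁, cutdown g (ε₂ / 2)]) :=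
  cuntzLE_matrix (main_approx a g ha₀ ha₁ hg₀ hg₁ ε₁ ε₂ hε₁ hε₂)
end

section
/- Let A be a unital C*-algebra, let ε > 0, let a ∈ A be positive with ‖a‖ ≤ 1, and let n be a positive integer. Then (1 − aⁿ − ε)_+ ≼_A (1 − a − ε/n)_+. -/
lemma aux_one_sub_pow_le {t : ℝ} (h0 : 0 ≤ t) (h1 : t ≤ 1) (n : ℕ) :
    1 - t ^ n ≤ n * (1 - t) := by
  induction n with
  | zero => simp
  | succ k ih =>
    have htk : t ^ k ≤ 1 := pow_le_one₀ h0 h1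
    have hid : 1 - t ^ (k + 1) = (1 - t ^ k) + t ^ k * (1 - t) := by ring
    rw [hid]
    push_cast
    nlinarith [pow_nonneg h0 k]

theorem stmt11 {A : Type*} [CStarAlgebra A] [PartialOrder A] [StarOrderedRing A]
    (ε : ℝ) (hε : 0 < ε) (a : A) (ha : 0 ≤ a) (hnorm : ‖a‖ ≤ 1)
    (n : ℕ) (hn : 0 < n) :
    CuntzLE (cutdown (1 - a ^ n) ε) (cutdown (1 - a) (ε / n)) := by
  rcases subsingleton_or_nontrivial A with hs | hnt
  · intro ε' hε'
    refine ⟨0, ?_⟩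
    have : (0 : A) * cutdown (1 - a) (ε / n) * star (0 : A) - cutdown (1 - a ^ n) ε = 0 :=
      Subsingleton.elim _ _
    rw [this, norm_zero]; exact hε'
  have ha' : IsSelfAdjoint a := IsSelfAdjoint.of_nonneg ha
  set f : ℝ → ℝ := fun t => max (1 - t ^ n - ε) 0 with hf_def
  set g : ℝ → ℝ := fun t => max (1 - t - ε / n) 0 with hg_def
  have hfc : Continuous f := (continuous_const.sub (continuous_pow n) |>.sub continuous_const).max continuous_const
  have hgc : Continuous g := ((continuous_const.sub continuous_id).sub continuous_const).max continuous_const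
  have hcutc : Continuous (fun t : ℝ => max (t - ε) 0) :=
    (continuous_id.sub continuous_const).max continuous_const
  have hcutc' : Continuous (fun t : ℝ => max (t - ε / n) 0) :=
    (continuous_id.sub continuous_const).max continuous_const
  -- spectrum in [0,1]
  have hspec : spectrum ℝ a ⊆ Set.Icc 0 1 := by
    intro x hx
    refine ⟨spectrum_nonneg_of_nonneg ha hx, ?_⟩
    have := spectrum.norm_le_norm_of_mem hx
    rw [Real.norm_eq_abs] at this
    exact (le_abs_self x).trans (this.trans hnorm)
  -- key pointwise inequality
  have hkey : ∀ x ∈ spectrum ℝ a, f x ≤ n * g x := by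
    intro x hx
    obtain ⟨hx0, hx1⟩ := hspec hx
    by_cases h : 1 - x ^ n - ε ≤ 0
    · calc f x = 0 := max_eq_right h
        _ ≤ n * g x := by positivity
    · push_neg at h
      have h2 : 1 - x ^ n ≤ n * (1 - x) := aux_one_sub_pow_le hx0 hx1 n
      have hn' : (n : ℝ) ≠ 0 := Nat.cast_ne_zero.mpr hn.ne'
      calc f x = 1 - x ^ n - ε := max_eq_left h.le
        _ ≤ n * (1 - x - ε / n) := by field_simp; linarith
        _ ≤ n * g x := by
            gcongr
            exact le_max_left _ _
  -- rewrite the cutdowns via composition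
  have h1n : (1 : A) - a ^ n = cfc (fun t : ℝ => 1 - t ^ n) a := by
    rw [cfc_sub (fun _ : ℝ => (1 : ℝ)) (fun t : ℝ => t ^ n) a, cfc_const_one ℝ a, cfc_pow_id a n]
  have h1 : (1 : A) - a = cfc (fun t : ℝ => 1 - t) a := by
    rw [cfc_sub (fun _ : ℝ => (1 : ℝ)) (fun t : ℝ => t) a, cfc_const_one ℝ a, cfc_id' ℝ a]
  have hcut1 : cutdown (1 - a ^ n) ε = cfc f a := by
    rw [cutdown, h1n, ← cfc_comp' (fun t => max (t - ε) 0) (fun t : ℝ => 1 - t ^ n) a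
      (hcutc.continuousOn) ((continuous_const.sub (continuous_pow n)).continuousOn)]
  have hcut2 : cutdown (1 - a) (ε / n) = cfc g a := by
    rw [cutdown, h1, ← cfc_comp' (fun t => max (t - ε / n) 0) (fun t : ℝ => 1 - t) a
      (hcutc'.continuousOn) ((continuous_const.sub continuous_id).continuousOn)]
  rw [hcut1, hcut2]
  intro ε' hε'
  set δ : ℝ := ε' / 2 with hδ_def
  have hδ : 0 < δ := by positivity
  set h : ℝ → ℝ := fun t => Real.sqrt (max (f t - δ) 0 / g t) with hh_def
  have hnumc : Continuous (fun t => max (f t - δ) 0) :=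
    (hfc.sub continuous_const).max continuous_const
  have hg0 : ∀ t, 0 ≤ g t := fun t => le_max_right _ _
  have hhc : ContinuousOn h (spectrum ℝ a) := by
    intro t₀ ht₀
    by_cases hgt : g t₀ = 0
    · -- f t₀ = 0, hence h vanishes near t₀
      have hft₀ : f t₀ = 0 := by
        have := hkey t₀ ht₀
        rw [hgt, mul_zero] at this
        exact le_antisymm this (le_max_right _ _)
      have hev : ∀ᶠ t in nhds t₀, f t < δ := by
        have : ContinuousAt f t₀ := hfc.continuousAt
        exact this.eventually_lt continuousAt_const (by rw [hft₀]; exact hδ)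
      have hev0 : ∀ᶠ t in nhds t₀, h t = 0 := by
        filter_upwards [hev] with t ht
        have : max (f t - δ) 0 = 0 := max_eq_right (by linarith)
        simp [hh_def, this]
      have : ContinuousAt h t₀ := by
        rw [continuousAt_congr (g := fun _ => (0 : ℝ)) hev0]
        exact continuousAt_const
      exact this.continuousWithinAt
    · have : ContinuousAt h t₀ := by
        apply Real.continuous_sqrt.continuousAt.comp
        exact (hnumc.continuousAt.div hgc.continuousAt hgt)
      exact this.continuousWithinAt
  refine ⟨cfc h a, ?_⟩
  have hstar : star (cfc h a) = cfc h a := by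
    rw [← cfc_star]
    simp
  rw [hstar]
  have hmul : cfc h a * cfc g a * cfc h a = cfc (fun t => h t * g t * h t) a := by
    rw [cfc_mul (fun t => h t * g t) h a ((hhc.mul hgc.continuousOn))
        hhc, cfc_mul h g a hhc hgc.continuousOn]
  rw [hmul]
  have hcongr : cfc (fun t => h t * g t * h t) a = cfc (fun t => max (f t - δ) 0) a := by
    apply cfc_congr
    intro t ht
    have hq : 0 ≤ max (f t - δ) 0 / g t := div_nonneg (le_max_right _ _) (hg0 t)
    by_cases hgt : g t = 0
    · have hft : f t = 0 := by
        have := hkey t ht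
        rw [hgt, mul_zero] at this
        exact le_antisymm this (le_max_right _ _)
      have : max (f t - δ) 0 = 0 := max_eq_right (by rw [hft]; linarith)
      simp [hh_def, hgt, this]
    · show h t * g t * h t = _
      rw [mul_comm (h t * g t) (h t), ← mul_assoc, hh_def]
      simp only
      rw [Real.mul_self_sqrt hq, div_mul_cancel₀ _ hgt]
  rw [hcongr]
  have hsub : cfc (fun t => max (f t - δ) 0) a - cfc f a
      = cfc (fun t => max (f t - δ) 0 - f t) a := by
    rw [cfc_sub (fun t => max (f t - δ) 0) f a hnumc.continuousOn hfc.continuousOn]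
  calc ‖cfc (fun t => max (f t - δ) 0) a - cfc f a‖
      = ‖cfc (fun t => max (f t - δ) 0 - f t) a‖ := by rw [hsub]
    _ ≤ δ := by
        apply norm_cfc_le hδ.le
        intro x hx
        have hf0 : 0 ≤ f x := le_max_right _ _
        rw [Real.norm_eq_abs, abs_le]
        constructor
        · rcases le_or_gt (f x) δ with hc | hc
          · rw [max_eq_right (by linarith)]; linarith
          · rw [max_eq_left (by linarith)]; linarith
        · rcases le_or_gt (f x) δ with hc | hc
          · rw [max_eq_right (by linarith)]; linarith
          · rw [max_eq_left (by linarith)]; linarith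
    _ < ε' := by rw [hδ_def]; linarith
end

section
/- Let ε > 0 and let f : [0, 1] → [0, 1] be a continuous function with f(0) = 0 and f(1) = 1. Then there exists δ > 0 such that whenever A is a unital C*-algebra and a ∈ A is positive with ‖a‖ ≤ 1, one has (1 − f(a) − ε)_+ ≼_A (1 − a − δ)_+, where f(a) denotes the image of a under the continuous functional calculus applied to f. -/
set_option maxHeartbeats 1000000


theorem stmt12 (ε : ℝ) (hε : 0 < ε) (f : ℝ → ℝ)
    (hf : ContinuousOn f (Set.Icc 0 1)) (hmaps : Set.MapsTo f (Set.Icc 0 1) (Set.Icc 0 1))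
    (hf0 : f 0 = 0) (hf1 : f 1 = 1) :
    ∃ δ > (0 : ℝ), ∀ (A : Type) [CStarAlgebra A] [PartialOrder A] [StarOrderedRing A],
      ∀ a : A, 0 ≤ a → ‖a‖ ≤ 1 →
        CuntzLE (cutdown (1 - cfc f a) ε) (cutdown (1 - a) δ) := by
  have h1 : (1:ℝ) ∈ Set.Icc (0:ℝ) 1 := by norm_num
  obtain ⟨δ0, hδ0, hδ0'⟩ := Metric.continuousWithinAt_iff.mp (hf 1 h1) ε hε
  set δ : ℝ := δ0 / 4 with hδdef
  have hδpos : 0 < δ := by positivity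
  refine ⟨δ, hδpos, ?_⟩
  intro A _ _ _ a ha hnorm
  rcases subsingleton_or_nontrivial A with hA | hA
  · intro ε' hε'
    refine ⟨0, ?_⟩
    rw [Subsingleton.elim (0 * cutdown (1 - a) δ * star 0 - cutdown (1 - cfc f a) ε) (0 : A),
      norm_zero]
    exact hε'
  have hsa : IsSelfAdjoint a := ha.isSelfAdjoint
  have hspec : spectrum ℝ a ⊆ Set.Icc 0 1 := by
    intro x hx
    refine ⟨spectrum_nonneg_of_nonneg ha hx, ?_⟩
    have h2 := spectrum.norm_le_norm_of_mem hx
    rw [Real.norm_eq_abs] at h2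
    have := le_abs_self x
    linarith
  have hkey : ∀ t ∈ Set.Icc (0:ℝ) 1, 1 - 2*δ < t → 1 - ε < f t := by
    intro t ht hlt
    have hd : dist t 1 < δ0 := by
      rw [Real.dist_eq, abs_sub_lt_iff]
      constructor
      · linarith [ht.2]
      · simp only [hδdef] at hlt ⊢; linarith
    have h3 := hδ0' ht hd
    rw [Real.dist_eq, hf1, abs_sub_lt_iff] at h3
    linarith [h3.2]
  set g : ℝ → ℝ := fun t => max (1 - f t - ε) 0 with hgdef
  set h : ℝ → ℝ := fun t => max (1 - t - δ) 0 with hhdef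
  set k : ℝ → ℝ := fun t => g t / max (h t) δ with hkdef
  have hfs : ContinuousOn f (spectrum ℝ a) := hf.mono hspec
  have hgc : ContinuousOn g (spectrum ℝ a) := by
    exact ((continuousOn_const.sub hfs).sub continuousOn_const).sup continuousOn_const
  have hhc : Continuous h := by
    exact ((continuous_const.sub continuous_id).sub continuous_const).sup continuous_const
  have hdenom : ∀ t, max (h t) δ ≠ 0 := fun t =>
    ne_of_gt (lt_of_lt_of_le hδpos (le_max_right _ _))
  have hmaxc : Continuous fun t => max (h t) δ := by
    exact hhc.sup continuous_const
  have hkc : ContinuousOn k (spectrum ℝ a) :=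
    hgc.div hmaxc.continuousOn (fun t _ => hdenom t)
  have hknn : ∀ t, 0 ≤ k t := fun t =>
    div_nonneg (le_max_right _ _) (le_of_lt (lt_of_lt_of_le hδpos (le_max_right _ _)))
  have hskc : ContinuousOn (fun t => Real.sqrt (k t)) (spectrum ℝ a) :=
    Real.continuous_sqrt.comp_continuousOn hkc
  have hgeq : ∀ t ∈ Set.Icc (0:ℝ) 1, Real.sqrt (k t) * h t * Real.sqrt (k t) = g t := by
    intro t ht
    have hsq : Real.sqrt (k t) * h t * Real.sqrt (k t) = k t * h t := by
      rw [mul_comm _ (h t), mul_assoc, Real.mul_self_sqrt (hknn t)]; ring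
    rw [hsq]
    rcases le_or_gt t (1 - 2*δ) with hc | hc
    · have hht : δ ≤ h t := le_trans (by linarith) (le_max_left (1 - t - δ) 0)
      have hmax : max (h t) δ = h t := max_eq_left hht
      show g t / max (h t) δ * h t = g t
      rw [hmax]
      exact div_mul_cancel₀ _ (ne_of_gt (lt_of_lt_of_le hδpos hht))
    · have hft := hkey t ht hc
      have hg0 : g t = 0 := max_eq_right (by linarith)
      show g t / max (h t) δ * h t = g t
      rw [hg0, zero_div, zero_mul]
  have hcut1 : cutdown (1 - cfc f a) ε = cfc g a := by
    have e1 : (1 : A) - cfc f a = cfc (fun t : ℝ => 1 - f t) a := by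
      rw [cfc_sub (fun _ : ℝ => (1:ℝ)) f a continuousOn_const hfs, cfc_const_one ℝ a hsa]
    rw [cutdown, e1, ← cfc_comp' (fun t : ℝ => max (t - ε) 0) (fun t : ℝ => 1 - f t) a
      (by exact ((continuous_id.sub continuous_const).sup continuous_const).continuousOn)
      (continuousOn_const.sub hfs) hsa]
  have hcut2 : cutdown (1 - a) δ = cfc h a := by
    have e1 : (1 : A) - a = cfc (fun t : ℝ => 1 - t) a := by
      rw [cfc_sub (fun _ : ℝ => (1:ℝ)) (fun t : ℝ => t) a continuousOn_const
        continuousOn_id, cfc_const_one ℝ a hsa, cfc_id' ℝ a hsa]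
    rw [cutdown, e1, ← cfc_comp' (fun t : ℝ => max (t - δ) 0) (fun t : ℝ => 1 - t) a
      (by exact ((continuous_id.sub continuous_const).sup continuous_const).continuousOn)
      (continuousOn_const.sub continuousOn_id) hsa]
  set y : A := cfc (fun t => Real.sqrt (k t)) a with hydef
  have hysa : IsSelfAdjoint y := cfc_predicate _ a
  have hprod : y * cfc h a * y = cfc g a := by
    rw [hydef, ← cfc_mul _ _ a hskc hhc.continuousOn,
      ← cfc_mul (fun x => Real.sqrt (k x) * h x) (fun t => Real.sqrt (k t)) a (hskc.mul hhc.continuousOn) hskc]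
    exact cfc_congr (fun t ht => hgeq t (hspec ht))
  intro ε' hε'
  refine ⟨y, ?_⟩
  rw [hcut1, hcut2, hysa.star_eq, hprod, sub_self, norm_zero]
  exact hε'
end
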